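/- Let a > 0, b > 0 be real numbers, set c = (1 + e^{a b})/e^{a b} and d = 1/(1 + e^{a b}), and define U(P) = c·(1/(1 + e^{-a(P-b)}) − d). Then for every P > 0 the second derivative of P ↦ log U(P) exists and equals −a²·d·e^{-a(P-b)} / ( c·(1 − d·(1 + e^{-a(P-b)}))² ) − a²·e^{-a(P-b)}/(1 + e^{-a(P-b)})², and this quantity is strictly negative. -/

import Mathlib

open Real

set_option maxHeartbeats 1000000

/-- For the sigmoidal-like utility `U(P) = c·(1/(1 + e^{-a(P-b)}) − d)` with `a > 0`,
`b > 0`, `c = (1 + e^{ab})/e^{ab}`, `d = 1/(1 + e^{ab})`: for every `P > 0` the second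
derivative of `P ↦ log U(P)` exists and equals
`−a²·d·e^{-a(P-b)}/(c·(1 − d·(1 + e^{-a(P-b)}))²) − a²·e^{-a(P-b)}/(1 + e^{-a(P-b)})²`,
and this quantity is strictly negative. -/
theorem log_sigmoidal_second_deriv_neg
    (a b c d : ℝ) (ha : 0 < a) (hb : 0 < b)
    (hc : c = (1 + Real.exp (a * b)) / Real.exp (a * b))
    (hd : d = 1 / (1 + Real.exp (a * b)))
    (U : ℝ → ℝ)
    (hU : ∀ P : ℝ, U P = c * (1 / (1 + Real.exp (-a * (P - b))) - d)) :
    ∀ P : ℝ, 0 < P →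
      HasDerivAt (deriv (fun P => Real.log (U P)))
        (-(a ^ 2) * d * Real.exp (-a * (P - b))
            / (c * (1 - d * (1 + Real.exp (-a * (P - b)))) ^ 2)
          - a ^ 2 * Real.exp (-a * (P - b)) / (1 + Real.exp (-a * (P - b))) ^ 2) P ∧
      (-(a ^ 2) * d * Real.exp (-a * (P - b))
            / (c * (1 - d * (1 + Real.exp (-a * (P - b)))) ^ 2)
          - a ^ 2 * Real.exp (-a * (P - b)) / (1 + Real.exp (-a * (P - b))) ^ 2) < 0 := by
  have hApos : (0:ℝ) < Real.exp (a * b) := Real.exp_pos _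
  have hA1 : (0:ℝ) < 1 + Real.exp (a * b) := by linarith
  have hcpos : 0 < c := by rw [hc]; positivity
  have hdpos : 0 < d := by rw [hd]; positivity
  set E : ℝ → ℝ := fun x => Real.exp (-a * (x - b)) with hEdef
  have hEpos : ∀ x, 0 < E x := fun x => Real.exp_pos _
  have h1E : ∀ x, 0 < 1 + E x := fun x => by have := hEpos x; linarith
  have hden : ∀ x, 0 < x → 0 < 1 - d * (1 + E x) := by
    intro x hx
    have hElt : E x < Real.exp (a * b) := Real.exp_lt_exp.mpr (by nlinarith)
    have h1 : d * (1 + E x) < 1 := by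
      rw [hd, div_mul_eq_mul_div, one_mul, div_lt_one hA1]
      linarith
    linarith
  have hinvpos : ∀ x, 0 < x → 0 < (1 + E x)⁻¹ - d := by
    intro x hx
    have heq : (1 + E x)⁻¹ - d = (1 - d * (1 + E x)) / (1 + E x) := by
      rw [sub_div, mul_div_assoc, div_self (ne_of_gt (h1E x)), one_div, mul_one]
    rw [heq]
    exact div_pos (hden x hx) (h1E x)
  -- the first derivative function
  set g : ℝ → ℝ := fun x => a * E x / ((1 + E x) * (1 - d * (1 + E x))) with hgdef
  have hEderiv : ∀ x : ℝ, HasDerivAt E (E x * -a) x := by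
    intro x
    have h0 : HasDerivAt (fun y : ℝ => -a * (y - b)) (-a) x := by
      simpa using ((hasDerivAt_id x).sub_const b).const_mul (-a)
    exact h0.exp
  have hlogderiv : ∀ x, 0 < x → HasDerivAt (fun y => Real.log (U y)) (g x) x := by
    intro x hx
    have h1 : HasDerivAt (fun y => 1 + E y) (E x * -a) x := (hEderiv x).const_add 1
    have h2 : HasDerivAt (fun y => (1 + E y)⁻¹) (-(E x * -a) / (1 + E x) ^ 2) x :=
      h1.inv (ne_of_gt (h1E x))
    have h3 : HasDerivAt (fun y => c * ((1 + E y)⁻¹ - d))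
        (c * (-(E x * -a) / (1 + E x) ^ 2)) x := (h2.sub_const d).const_mul c
    have hUne : c * ((1 + E x)⁻¹ - d) ≠ 0 :=
      ne_of_gt (mul_pos hcpos (hinvpos x hx))
    have hUx : (fun y => Real.log (U y)) = fun y => Real.log (c * ((1 + E y)⁻¹ - d)) := by
      funext y; rw [hU y, one_div]
    have h4 := h3.log hUne
    rw [hUx]
    convert h4 using 1
    have hne1 : (1 + E x) ≠ 0 := ne_of_gt (h1E x)
    have hne2 : 1 - d * (1 + E x) ≠ 0 := ne_of_gt (hden x hx)
    have hcne : c ≠ 0 := ne_of_gt hcpos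
    have heq : (1 + E x)⁻¹ - d = (1 - d * (1 + E x)) / (1 + E x) := by
      field_simp
    rw [hgdef, heq]
    field_simp
  intro P hP
  -- second derivative of g
  have hNP : HasDerivAt (fun x => a * E x) (a * (E P * -a)) P := (hEderiv P).const_mul a
  have h1P : HasDerivAt (fun x => 1 + E x) (E P * -a) P := (hEderiv P).const_add 1
  have h2P : HasDerivAt (fun x => 1 - d * (1 + E x)) (-(d * (E P * -a))) P := by
    simpa using (((hEderiv P).const_add 1).const_mul d).const_sub 1
  have hDP : HasDerivAt (fun x => (1 + E x) * (1 - d * (1 + E x)))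
      ((E P * -a) * (1 - d * (1 + E P)) + (1 + E P) * (-(d * (E P * -a)))) P :=
    h1P.mul h2P
  have hDne : (1 + E P) * (1 - d * (1 + E P)) ≠ 0 :=
    ne_of_gt (mul_pos (h1E P) (hden P hP))
  have hgP : HasDerivAt g
      ((a * (E P * -a) * ((1 + E P) * (1 - d * (1 + E P))) -
        a * E P * ((E P * -a) * (1 - d * (1 + E P)) + (1 + E P) * (-(d * (E P * -a)))))
        / ((1 + E P) * (1 - d * (1 + E P))) ^ 2) P := hNP.div hDP hDne
  have hval :
      (a * (E P * -a) * ((1 + E P) * (1 - d * (1 + E P))) -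
        a * E P * ((E P * -a) * (1 - d * (1 + E P)) + (1 + E P) * (-(d * (E P * -a)))))
        / ((1 + E P) * (1 - d * (1 + E P))) ^ 2
      = -(a ^ 2) * d * E P / (c * (1 - d * (1 + E P)) ^ 2)
          - a ^ 2 * E P / (1 + E P) ^ 2 := by
    have hne1 : (1 + E P) ≠ 0 := ne_of_gt (h1E P)
    have hne2 : 1 - d * (1 + E P) ≠ 0 := ne_of_gt (hden P hP)
    have hcne : c ≠ 0 := ne_of_gt hcpos
    have hAne : Real.exp (a * b) ≠ 0 := ne_of_gt hApos
    have hA1ne : (1 + Real.exp (a * b)) ≠ 0 := ne_of_gt hA1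
    have hElt : E P < Real.exp (a * b) := Real.exp_lt_exp.mpr (by nlinarith)
    have hKe : Real.exp (a * b) - E P ≠ 0 := sub_ne_zero.mpr (ne_of_gt hElt)
    have hsub : 1 - 1 / (1 + Real.exp (a * b)) * (1 + E P)
        = (Real.exp (a * b) - E P) / (1 + Real.exp (a * b)) := by
      field_simp; ring
    rw [hc, hd, hsub]
    field_simp
    ring
  have hgP' : HasDerivAt g
      (-(a ^ 2) * d * E P / (c * (1 - d * (1 + E P)) ^ 2)
        - a ^ 2 * E P / (1 + E P) ^ 2) P := hval ▸ hgP
  have hevent : deriv (fun y => Real.log (U y)) =ᶠ[nhds P] g := by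
    filter_upwards [Ioi_mem_nhds hP] with x hx
    exact (hlogderiv x hx).deriv
  refine ⟨hgP'.congr_of_eventuallyEq hevent, ?_⟩
  have hpos1 : 0 < a ^ 2 * d * E P / (c * (1 - d * (1 + E P)) ^ 2) := by
    apply div_pos
    · positivity
    · exact mul_pos hcpos (pow_pos (hden P hP) 2)
  have hpos2 : 0 < a ^ 2 * E P / (1 + E P) ^ 2 := by
    apply div_pos
    · positivity
    · exact pow_pos (h1E P) 2
  have : -(a ^ 2) * d * E P / (c * (1 - d * (1 + E P)) ^ 2)
      = -(a ^ 2 * d * E P / (c * (1 - d * (1 + E P)) ^ 2)) := by ring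
  rw [this]
  linarith
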